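/- Let $k \in \mathbb{N}$ be even and $h \in \mathbb{Z}$ with $\gcd(h,k) = 1$. Then the Hardy sum $s_2(h,k) = \sum_{a=0}^{k-1} (-1)^a ((a/k))((ah/k))$ satisfies $s_2(h,k) = -\frac{1}{4k} \sum_{1 \le a \le k-1, a \ne k/2} \tan(\pi a h/k) \cot(\pi a/k)$. -/

import Mathlib

open scoped Classical

/-- The sawtooth function `((x))`. -/
noncomputable def saw (x : ℝ) : ℝ :=
  if ∃ m : ℤ, x = m then 0 else Int.fract x - 1 / 2

/-- The cotangent function. -/
noncomputable def cot (x : ℝ) : ℝ := Real.cos x / Real.sin x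

open Finset

noncomputable def ee (k : ℕ) (r : ℤ) : ℂ := Complex.exp (2 * Real.pi * Complex.I * r / k)


lemma ee_zero (k : ℕ) : ee k 0 = 1 := by simp [ee]

lemma ee_pow (k : ℕ) (r : ℤ) (n : ℕ) : ee k (r * n) = (ee k r) ^ n := by
  rw [ee, ee, ← Complex.exp_nat_mul]
  congr 1
  push_cast
  ring

lemma ee_eq_one_iff {k : ℕ} (hk : 0 < k) (r : ℤ) : ee k r = 1 ↔ (k : ℤ) ∣ r := by
  rw [ee, Complex.exp_eq_one_iff]
  constructor
  · rintro ⟨n, hn⟩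
    have hk' : (k : ℂ) ≠ 0 := Nat.cast_ne_zero.mpr hk.ne'
    have hpi : (Real.pi : ℂ) ≠ 0 := Complex.ofReal_ne_zero.mpr Real.pi_ne_zero
    have h2 : (2 : ℂ) * Real.pi * Complex.I ≠ 0 := by
      simp [hpi, Complex.I_ne_zero]
    field_simp at hn
    have hrc : (r : ℂ) = n * k := mul_left_cancel₀ h2 (by linear_combination (2 * (Real.pi:ℂ) * Complex.I) * hn)
    have hr : r = n * (k : ℤ) := by exact_mod_cast hrc
    exact ⟨n, by rw [hr]; ring⟩
  · rintro ⟨n, rfl⟩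
    refine ⟨n, ?_⟩
    have hk' : (k : ℂ) ≠ 0 := Nat.cast_ne_zero.mpr hk.ne'
    field_simp
    push_cast
    ring

lemma ee_k_pow {k : ℕ} (hk : 0 < k) (r : ℤ) : (ee k r) ^ k = 1 := by
  rw [← ee_pow]
  rw [ee_eq_one_iff hk]
  exact ⟨r, by ring⟩

lemma sum_ee {k : ℕ} (hk : 0 < k) (r : ℤ) :
    ∑ n ∈ range k, ee k (r * n) = if (k : ℤ) ∣ r then (k : ℂ) else 0 := by
  have : ∀ n ∈ range k, ee k (r * n) = (ee k r) ^ n := fun n _ => ee_pow k r n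
  rw [Finset.sum_congr rfl this]
  by_cases hd : (k : ℤ) ∣ r
  · rw [if_pos hd]
    have h1 : ee k r = 1 := (ee_eq_one_iff hk r).mpr hd
    simp [h1]
  · rw [if_neg hd]
    have h1 : ee k r ≠ 1 := fun hc => hd ((ee_eq_one_iff hk r).mp hc)
    rw [geom_sum_eq h1, ee_k_pow hk]
    simp



lemma saw_int_add (x : ℝ) (m : ℤ) : saw ((m : ℝ) + x) = saw x := by
  unfold saw
  have h1 : (∃ n : ℤ, (m:ℝ) + x = n) ↔ (∃ n : ℤ, x = n) := by
    constructor
    · rintro ⟨n, hn⟩; exact ⟨n - m, by push_cast; linarith⟩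
    · rintro ⟨n, rfl⟩; exact ⟨m + n, by push_cast; ring⟩
  rw [Int.fract_intCast_add]
  by_cases hc : ∃ n : ℤ, x = n
  · rw [if_pos hc, if_pos (h1.mpr hc)]
  · rw [if_neg hc, if_neg (fun hh => hc (h1.mp hh))]

lemma saw_frac {k : ℕ} (hk : 0 < k) {a : ℕ} (ha : 1 ≤ a) (hak : a < k) :
    saw ((a : ℝ) / k) = (a : ℝ) / k - 1 / 2 := by
  have h1 : 0 < (a : ℝ) / k := by
    apply div_pos
    · exact_mod_cast ha
    · exact_mod_cast hk
  have h2 : (a : ℝ) / k < 1 := by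
    rw [div_lt_one (by exact_mod_cast hk)]; exact_mod_cast hak
  unfold saw
  rw [if_neg, Int.fract_eq_self.mpr ⟨le_of_lt h1, h2⟩]
  rintro ⟨m, hm⟩
  rw [hm] at h1 h2
  have : 0 < m := by exact_mod_cast h1
  have : m < 1 := by exact_mod_cast h2
  omega

lemma gauss_real (n : ℕ) : ∑ i ∈ range n, (i : ℝ) = n * (n - 1) / 2 := by
  induction n with
  | zero => simp
  | succ m ih => rw [Finset.sum_range_succ, ih]; push_cast; ring

lemma sum_saw_eq_zero {k : ℕ} (hk : 0 < k) :
    ∑ b ∈ range k, saw ((b : ℝ) / k) = 0 := by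
  obtain ⟨k', rfl⟩ : ∃ k', k = k' + 1 := ⟨k - 1, by omega⟩
  rw [Finset.sum_range_succ']
  have h1 : ∀ i ∈ range k', saw (((i + 1 : ℕ) : ℝ) / ((k' + 1 : ℕ) : ℝ)) =
      (i : ℝ) * (1 / ((k' : ℝ) + 1)) + (1 / ((k' : ℝ) + 1) - 1 / 2) := by
    intro i hi
    rw [saw_frac hk (by omega) (by simp at hi; omega)]
    push_cast
    ring
  rw [Finset.sum_congr rfl h1, Finset.sum_add_distrib, ← Finset.sum_mul, Finset.sum_const,
    gauss_real]
  have h0 : saw (((0 : ℕ) : ℝ) / ((k' + 1 : ℕ) : ℝ)) = 0 := by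
    simp [saw]
    exact ⟨0, by simp⟩
  rw [h0, add_zero, Finset.card_range]
  have hne : (k' : ℝ) + 1 ≠ 0 := by positivity
  rw [nsmul_eq_mul]
  field_simp
  ring




lemma sum_mul_geom (z : ℂ) (n : ℕ) :
    (z - 1) * ∑ a ∈ range n, (a : ℂ) * z ^ a
      = ((n : ℂ) - 1) * z ^ n - ∑ a ∈ range n, z ^ a + 1 := by
  induction n with
  | zero => simp
  | succ m ih =>
    rw [Finset.sum_range_succ, Finset.sum_range_succ (f := fun a => z ^ a)]
    push_cast
    ring_nf
    ring_nf at ih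
    linear_combination ih

lemma cot_formula {n k : ℕ} (hk : 0 < k) (hn1 : 1 ≤ n) (hn2 : n < k) :
    1 / (ee k n - 1) + 1 / 2
      = -(Complex.I / 2) * ((cot (Real.pi * n / k) : ℝ) : ℂ) := by
  set θ : ℝ := Real.pi * n / k with hθ
  have hθpos : 0 < θ := by
    apply div_pos
    · exact mul_pos Real.pi_pos (by exact_mod_cast hn1)
    · exact_mod_cast hk
  have hθlt : θ < Real.pi := by
    rw [hθ, div_lt_iff₀ (by exact_mod_cast hk)]
    have : (n : ℝ) < k := by exact_mod_cast hn2
    nlinarith [Real.pi_pos]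
  have hsr : Real.sin θ ≠ 0 := ne_of_gt (Real.sin_pos_of_pos_of_lt_pi hθpos hθlt)
  have hs : Complex.sin (θ : ℂ) ≠ 0 := by
    rw [← Complex.ofReal_sin]
    exact_mod_cast hsr
  have hz1 : ee k (n : ℤ) ≠ 1 := by
    intro hc
    have hd := (ee_eq_one_iff hk _).mp hc
    have : (k : ℕ) ∣ n := by exact_mod_cast hd
    have := Nat.le_of_dvd (by omega) this
    omega
  have hzsub : ee k (n : ℤ) - 1 ≠ 0 := sub_ne_zero.mpr hz1
  have hz : ee k (n : ℤ) = (Complex.cos (θ : ℂ) + Complex.sin (θ : ℂ) * Complex.I) ^ 2 := by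
    rw [← Complex.exp_mul_I, ee, ← Complex.exp_nat_mul]
    · congr 1
      push_cast
      rw [hθ]
      push_cast
      have hkne : (k : ℂ) ≠ 0 := Nat.cast_ne_zero.mpr hk.ne'
      field_simp
  have hcot : ((cot θ : ℝ) : ℂ) = Complex.cos (θ : ℂ) / Complex.sin (θ : ℂ) := by
    rw [cot, Complex.ofReal_div, Complex.ofReal_cos, Complex.ofReal_sin]
  rw [hcot]
  set c := Complex.cos (θ : ℂ)
  set s := Complex.sin (θ : ℂ)
  have key : (ee k (n : ℤ) + 1) * s = -Complex.I * c * (ee k (n : ℤ) - 1) := by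
    rw [hz]
    linear_combination (-(s - Complex.I * c)) * Complex.sin_sq_add_cos_sq (θ : ℂ) +
      (s ^ 3 + 2 * c ^ 2 * s + c * s ^ 2 * Complex.I) * Complex.I_sq
  field_simp
  linear_combination key

lemma saw_zero : saw 0 = 0 := by
  unfold saw
  rw [if_pos ⟨0, by simp⟩]

lemma not_dvd_of_lt {k n : ℕ} (hn1 : 1 ≤ n) (hn2 : n < k) : ¬ ((k : ℤ) ∣ (n : ℤ)) := by
  intro hd
  have : (k : ℕ) ∣ n := by exact_mod_cast hd
  have := Nat.le_of_dvd (by omega) this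
  omega

lemma coef {k n : ℕ} (hk : 0 < k) (hn1 : 1 ≤ n) (hn2 : n < k) :
    ∑ a ∈ range k, ((saw ((a : ℝ) / k) : ℝ) : ℂ) * ee k ((n : ℤ) * a)
      = -(Complex.I / 2) * ((cot (Real.pi * n / k) : ℝ) : ℂ) := by
  have hz1 : ee k (n : ℤ) ≠ 1 := fun hc => not_dvd_of_lt hn1 hn2 ((ee_eq_one_iff hk _).mp hc)
  have hzsub : ee k (n : ℤ) - 1 ≠ 0 := sub_ne_zero.mpr hz1
  have hkc : (k : ℂ) ≠ 0 := Nat.cast_ne_zero.mpr hk.ne'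
  have hgeo : ∑ a ∈ range k, (ee k (n : ℤ)) ^ a = 0 := by
    have h1 := sum_ee hk (n : ℤ)
    rw [if_neg (not_dvd_of_lt hn1 hn2)] at h1
    rw [← h1]
    exact Finset.sum_congr rfl fun a _ => (ee_pow k _ a).symm
  have hak : ∑ a ∈ range k, (a : ℂ) * (ee k (n : ℤ)) ^ a = k / (ee k (n : ℤ) - 1) := by
    rw [eq_div_iff hzsub, mul_comm, sum_mul_geom, ee_k_pow hk, hgeo]
    ring
  have hsp : ∑ a ∈ range k, (((saw ((a : ℝ) / k) : ℝ) : ℂ) * (ee k (n : ℤ)) ^ a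
      - ((a : ℂ) / k - 1 / 2) * (ee k (n : ℤ)) ^ a) = 1 / 2 := by
    rw [Finset.sum_eq_single 0]
    · have h00 : ((0:ℕ):ℝ) / (k:ℝ) = 0 := by simp
      rw [h00, saw_zero]
      norm_num
    · intro b hb hb0
      rw [saw_frac hk (by omega) (by simp at hb; omega)]
      push_cast
      ring
    · intro hc
      simp at hc
      omega
  rw [Finset.sum_congr rfl (fun a _ => by rw [ee_pow k _ a])]
  have hsum : ∑ a ∈ range k, ((saw ((a : ℝ) / k) : ℝ) : ℂ) * (ee k (n : ℤ)) ^ a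
      = ∑ a ∈ range k, ((a : ℂ) / k - 1 / 2) * (ee k (n : ℤ)) ^ a + 1 / 2 := by
    rw [Finset.sum_sub_distrib] at hsp
    linear_combination hsp
  rw [hsum]
  have hexp : ∑ a ∈ range k, ((a : ℂ) / k - 1 / 2) * (ee k (n : ℤ)) ^ a
      = (1 / k) * ∑ a ∈ range k, (a : ℂ) * (ee k (n : ℤ)) ^ a
        - (1 / 2) * ∑ a ∈ range k, (ee k (n : ℤ)) ^ a := by
    rw [Finset.mul_sum, Finset.mul_sum, ← Finset.sum_sub_distrib]
    exact Finset.sum_congr rfl fun a _ => by ring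
  rw [hexp, hak, hgeo, ← cot_formula hk hn1 hn2]
  field_simp
  ring

lemma ee_add {k : ℕ} (hk : 0 < k) (r s : ℤ) : ee k (r + s) = ee k r * ee k s := by
  rw [ee, ee, ee, ← Complex.exp_add]
  congr 1
  have hkc : (k : ℂ) ≠ 0 := Nat.cast_ne_zero.mpr hk.ne'
  field_simp
  push_cast
  ring

lemma saw_int_div {k : ℕ} (hk : 0 < k) (x : ℤ) :
    saw ((x : ℝ) / k) = saw (((x % (k : ℤ)) : ℤ) / (k : ℝ)) := by
  have hkr : (k : ℝ) ≠ 0 := Nat.cast_ne_zero.mpr hk.ne'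
  have hx : (x : ℝ) / k = ((x / (k : ℤ) : ℤ) : ℝ) + ((x % (k : ℤ) : ℤ) : ℝ) / k := by
    have h1 : (k : ℤ) * (x / (k : ℤ)) + x % (k : ℤ) = x := Int.mul_ediv_add_emod x k
    have h2 : ((k : ℤ) : ℝ) * ((x / (k : ℤ) : ℤ) : ℝ) + ((x % (k : ℤ) : ℤ) : ℝ) = (x : ℝ) := by
      exact_mod_cast congrArg (Int.cast : ℤ → ℝ) h1
    field_simp
    push_cast at h2 ⊢
    linarith
  rw [hx, saw_int_add]

lemma inversion {k : ℕ} (hk : 0 < k) (x : ℤ) :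
    ((saw ((x : ℝ) / k) : ℝ) : ℂ)
      = (1 / k) * ∑ n ∈ range k,
          (∑ b ∈ range k, ((saw ((b : ℝ) / k) : ℝ) : ℂ) * ee k ((n : ℤ) * b)) * ee k (-(x * n)) := by
  have hkc : (k : ℂ) ≠ 0 := Nat.cast_ne_zero.mpr hk.ne'
  have hstep : ∀ n ∈ range k,
      (∑ b ∈ range k, ((saw ((b : ℝ) / k) : ℝ) : ℂ) * ee k ((n : ℤ) * b)) * ee k (-(x * n))
        = ∑ b ∈ range k, ((saw ((b : ℝ) / k) : ℝ) : ℂ) * ee k (((b : ℤ) - x) * n) := by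
    intro n _
    rw [Finset.sum_mul]
    refine Finset.sum_congr rfl fun b _ => ?_
    rw [mul_assoc, ← ee_add hk]
    congr 2
    ring
  rw [Finset.sum_congr rfl hstep, Finset.sum_comm]
  have hin : ∀ b ∈ range k,
      ∑ n ∈ range k, ((saw ((b : ℝ) / k) : ℝ) : ℂ) * ee k (((b : ℤ) - x) * n)
        = ((saw ((b : ℝ) / k) : ℝ) : ℂ) * (if (k : ℤ) ∣ ((b : ℤ) - x) then (k : ℂ) else 0) := by
    intro b _
    rw [← Finset.mul_sum, sum_ee hk]
  rw [Finset.sum_congr rfl hin]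
  set b₀ : ℕ := (x % (k : ℤ)).toNat with hb₀
  have hklt : (0 : ℤ) < k := by exact_mod_cast hk
  have hmod0 : 0 ≤ x % (k : ℤ) := Int.emod_nonneg x hklt.ne'
  have hmodlt : x % (k : ℤ) < k := Int.emod_lt_of_pos x hklt
  have hb₀cast : ((b₀ : ℕ) : ℤ) = x % (k : ℤ) := Int.toNat_of_nonneg hmod0
  rw [Finset.sum_eq_single b₀]
  · have hdvd : (k : ℤ) ∣ ((b₀ : ℤ) - x) := by
      rw [hb₀cast]
      exact ⟨-(x / (k:ℤ)), by linarith [Int.mul_ediv_add_emod x (k:ℤ)]⟩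
    rw [if_pos hdvd, saw_int_div hk x]
    have hcast : ((x % (k:ℤ) : ℤ) : ℝ) = ((b₀ : ℕ) : ℝ) := by
      rw [← hb₀cast]
      push_cast
      ring
    rw [hcast]
    field_simp
  · intro b hb hbne
    rw [if_neg, mul_zero]
    intro hd
    apply hbne
    have h1 : x % (k : ℤ) = (b : ℤ) % (k : ℤ) := Int.modEq_iff_dvd.mpr hd
    have h2 : (b : ℤ) % (k : ℤ) = b := by
      apply Int.emod_eq_of_lt (by positivity)
      simp at hb
      exact_mod_cast hb
    have : ((b₀ : ℕ) : ℤ) = (b : ℤ) := by rw [hb₀cast, h1, h2]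
    exact_mod_cast this.symm
  · intro hc
    exfalso
    apply hc
    simp only [Finset.mem_range]
    have : ((b₀ : ℕ) : ℤ) < k := by rw [hb₀cast]; exact hmodlt
    exact_mod_cast this




lemma cot_add_int_mul_pi (x : ℝ) (t : ℤ) : cot (x + t * Real.pi) = cot x := by
  have hs0 : Real.sin (t * Real.pi) = 0 := Real.sin_int_mul_pi t
  have hc0 : Real.cos (t * Real.pi) ≠ 0 := by
    rw [Real.cos_ne_zero_iff]
    intro n hn
    have : (2 * (t:ℝ) - (2 * n + 1)) * Real.pi = 0 := by
      push_cast at hn ⊢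
      linarith
    rcases mul_eq_zero.mp this with h1 | h2
    · have : (2 * t - (2 * n + 1) : ℤ) = 0 := by exact_mod_cast h1
      omega
    · exact Real.pi_ne_zero h2
  unfold cot
  rw [Real.sin_add, Real.cos_add, hs0]
  simp only [mul_zero, sub_zero, add_zero]
  rw [mul_div_mul_right _ _ hc0]

lemma cot_pi_div_two_sub (y : ℝ) : cot (Real.pi / 2 - y) = Real.tan y := by
  unfold cot
  rw [Real.cos_pi_div_two_sub, Real.sin_pi_div_two_sub, Real.tan_eq_sin_div_cos]

theorem hardy_s2 (k : ℕ) (hk : 0 < k) (hke : Even k) (h : ℤ) (hco : Int.gcd h k = 1) :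
    ∑ a ∈ Finset.range k, (-1 : ℝ) ^ a * saw ((a : ℝ) / k) * saw (a * (h : ℝ) / k)
      = -(1 / (4 * k)) *
          ∑ a ∈ (Finset.Icc 1 (k - 1)).filter (fun a => a ≠ k / 2),
            Real.tan (Real.pi * a * (h : ℝ) / k) * cot (Real.pi * a / k) := by
  set j := k / 2 with hjdef
  have hj : k = 2 * j := by
    obtain ⟨t, ht⟩ := hke
    omega
  have hj1 : 1 ≤ j := by omega
  have hodd : Odd h := by
    rcases Int.even_or_odd h with he | ho
    · exfalso
      obtain ⟨m, hm⟩ := he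
      have h2 : (2 : ℕ) ∣ Int.gcd h k := by
        apply Nat.dvd_gcd
        · have h2 : (2:ℤ) ∣ h := ⟨m, by omega⟩
          simpa using Int.natAbs_dvd_natAbs.mpr h2
        · have h2 : (2:ℤ) ∣ (k:ℤ) := ⟨j, by exact_mod_cast hj⟩
          simpa using Int.natAbs_dvd_natAbs.mpr h2
      rw [hco] at h2
      omega
    · exact ho
  obtain ⟨mo, hmo⟩ := hodd
  have hkc : (k : ℂ) ≠ 0 := Nat.cast_ne_zero.mpr hk.ne'
  have hkr : (k : ℝ) ≠ 0 := Nat.cast_ne_zero.mpr hk.ne'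
  have hklt : (0:ℤ) < (k:ℤ) := by exact_mod_cast hk
  have hcop : IsCoprime (k : ℤ) h := by
    rw [Int.isCoprime_iff_gcd_eq_one, Int.gcd_comm]
    exact hco
  -- the Fourier coefficients
  set c : ℕ → ℂ := fun n => ∑ b ∈ range k, ((saw ((b : ℝ) / k) : ℝ) : ℂ) * ee k ((n : ℤ) * b)
    with hcdef
  have hc0 : c 0 = 0 := by
    have : c 0 = ∑ b ∈ range k, ((saw ((b : ℝ) / k) : ℝ) : ℂ) := by
      rw [hcdef]
      refine Finset.sum_congr rfl fun b _ => ?_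
      have : ((0:ℕ):ℤ) * (b:ℤ) = 0 := by simp
      rw [this, show ee k 0 = 1 by rw [ee]; simp, mul_one]
    rw [this, ← Complex.ofReal_sum, sum_saw_eq_zero hk]
    simp
  have hcoef : ∀ n : ℕ, 1 ≤ n → n < k →
      c n = -(Complex.I / 2) * ((cot (Real.pi * n / k) : ℝ) : ℂ) := by
    intro n h1 h2
    rw [hcdef]
    exact coef hk h1 h2
  have hinv : ∀ x : ℤ, ((saw ((x : ℝ) / k) : ℝ) : ℂ)
      = (1 / k) * ∑ n ∈ range k, c n * ee k (-(x * n)) := fun x => inversion hk x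
  -- m-index as a function of n
  set mm : ℕ → ℕ := fun n => (((j:ℤ) - h * n) % (k:ℤ)).toNat with hmmdef
  have hmmlt : ∀ n, mm n < k := by
    intro n
    have h1 : ((j:ℤ) - h * n) % (k:ℤ) < k := Int.emod_lt_of_pos _ hklt
    have h2 : 0 ≤ ((j:ℤ) - h * n) % (k:ℤ) := Int.emod_nonneg _ hklt.ne'
    exact (Int.toNat_lt h2).mpr h1
  have hmmcast : ∀ n : ℕ, ((mm n : ℕ) : ℤ) = ((j:ℤ) - h * n) % (k:ℤ) :=
    fun n => Int.toNat_of_nonneg (Int.emod_nonneg _ hklt.ne')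
  have hU : ∀ n : ℕ, ∀ m ∈ range k, ((k:ℤ) ∣ ((j:ℤ) - m - h * n) ↔ m = mm n) := by
    intro n m hm
    simp only [Finset.mem_range] at hm
    constructor
    · intro hd
      have hd' : (k:ℤ) ∣ (((j:ℤ) - h*n) - m) := by
        rw [show ((j:ℤ) - h*n) - m = (j:ℤ) - m - h*n by ring]
        exact hd
      have h1 : (m:ℤ) % (k:ℤ) = ((j:ℤ) - h*n) % (k:ℤ) := Int.modEq_iff_dvd.mpr hd'
      have h2 : (m:ℤ) % (k:ℤ) = m := Int.emod_eq_of_lt (by positivity) (by exact_mod_cast hm)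
      have h3 : (m:ℤ) = ((mm n : ℕ) : ℤ) := by rw [hmmcast n, ← h1, h2]
      exact_mod_cast h3
    · intro hme
      subst hme
      have h1 := hmmcast n
      refine ⟨((j:ℤ) - h*n) / k, ?_⟩
      rw [h1]
      linear_combination -(Int.emod_add_mul_ediv ((j:ℤ) - h*n) k)
  -- powers of -1
  have hjz : (k:ℤ) = 2 * (j:ℤ) := by exact_mod_cast hj
  have hjr : (k:ℝ) = 2 * (j:ℝ) := by exact_mod_cast hj
  have hjc : (j:ℂ) ≠ 0 := Nat.cast_ne_zero.mpr (by omega)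
  have hm1 : ee k ((j:ℤ)) = -1 := by
    rw [ee, ← Complex.exp_pi_mul_I]
    congr 1
    have : (k:ℂ) = 2 * (j:ℂ) := by exact_mod_cast hj
    rw [this]
    push_cast
    field_simp
  have hpow : ∀ a : ℕ, ee k ((j:ℤ) * a) = (-1:ℂ)^a := by
    intro a
    rw [ee_pow, hm1]
  -- mm j = 0
  have hdvdj : (k:ℤ) ∣ ((j:ℤ) - h * j) := ⟨-mo, by rw [hmo]; linear_combination (mo:ℤ) * hjz⟩
  have hmj : mm j = 0 := by
    have h1 : ((mm j : ℕ) : ℤ) = 0 := by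
      rw [hmmcast j, Int.emod_eq_zero_of_dvd hdvdj]
    exact_mod_cast h1
  -- mm n ≠ 0 off the singular set
  have hmn0 : ∀ n : ℕ, n < k → n ≠ 0 → n ≠ j → 1 ≤ mm n := by
    intro n hn hn0 hnj
    by_contra hc
    have hmm0 : mm n = 0 := by omega
    have h1 : (k:ℤ) ∣ ((j:ℤ) - h * n) := by
      have h2 := hmmcast n
      rw [hmm0] at h2
      exact Int.dvd_of_emod_eq_zero h2.symm
    have h3 : (k:ℤ) ∣ h * ((j:ℤ) - n) := by
      obtain ⟨t1, ht1⟩ := h1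
      obtain ⟨t2, ht2⟩ := hdvdj
      exact ⟨t1 - t2, by linear_combination ht1 - ht2⟩
    have h4 : (k:ℤ) ∣ ((j:ℤ) - n) := hcop.dvd_of_dvd_mul_left h3
    have h5 : ((j:ℤ) - n) = 0 := by
      apply Int.eq_zero_of_abs_lt_dvd h4
      rw [abs_lt]
      constructor <;> [omega; omega]
    have : (j:ℤ) = n := by omega
    exact hnj (by exact_mod_cast this.symm)
  -- cotangent of the conjugate index
  have hcotmm : ∀ n : ℕ, n < k → n ≠ 0 → n ≠ j →
      cot (Real.pi * (mm n) / k) = Real.tan (Real.pi * n * (h:ℝ) / k) := by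
    intro n hn hn0 hnj
    obtain ⟨t, ht⟩ : ∃ t : ℤ, ((mm n : ℕ) : ℤ) = (j:ℤ) - h * n + k * t := by
      refine ⟨-(((j:ℤ) - h * n) / k), ?_⟩
      rw [hmmcast n]
      linear_combination Int.emod_add_mul_ediv ((j:ℤ) - h*n) k
    have htr : ((mm n : ℕ) : ℝ) = (j:ℝ) - (h:ℝ) * n + (k:ℝ) * t := by exact_mod_cast ht
    have harg : Real.pi * (mm n) / k = (Real.pi / 2 - Real.pi * n * (h:ℝ) / k) + t * Real.pi := by
      rw [htr]
      field_simp
      rw [hjr]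
      ring
    rw [harg, cot_add_int_mul_pi, cot_pi_div_two_sub]
  -- main expansion
  apply Complex.ofReal_injective
  push_cast
  have hterm : ∀ a ∈ range k, (-1:ℂ)^a * ((saw ((a:ℝ)/k) : ℝ):ℂ) * ((saw ((a:ℝ)*(h:ℝ)/k) : ℝ):ℂ)
      = ∑ n ∈ range k, ∑ m ∈ range k,
          (1/(k:ℂ)^2) * (c m * c n * ee k (((j:ℤ) - m - h*n) * a)) := by
    intro a _
    have e1 : (a:ℝ)/k = (((a:ℤ)):ℝ)/k := by push_cast; ring
    have e2 : (a:ℝ)*(h:ℝ)/k = ((((a:ℤ)*h : ℤ)):ℝ)/k := by push_cast; ring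
    rw [e1, e2, hinv (a:ℤ), hinv ((a:ℤ)*h), show ((-1:ℂ))^a = ee k ((j:ℤ) * a) from (hpow a).symm]
    calc ee k ((j:ℤ)*a) * ((1/(k:ℂ)) * ∑ m ∈ range k, c m * ee k (-((a:ℤ) * m)))
          * ((1/(k:ℂ)) * ∑ n ∈ range k, c n * ee k (-(((a:ℤ)*h) * n)))
        = (1/(k:ℂ)^2) * (((∑ n ∈ range k, c n * ee k (-(((a:ℤ)*h) * n)))
            * (∑ m ∈ range k, c m * ee k (-((a:ℤ) * m)))) * ee k ((j:ℤ)*a)) := by ring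
      _ = (1/(k:ℂ)^2) * ((∑ n ∈ range k, ∑ m ∈ range k,
            (c n * ee k (-(((a:ℤ)*h) * n))) * (c m * ee k (-((a:ℤ) * m)))) * ee k ((j:ℤ)*a)) := by
          rw [Finset.sum_mul_sum]
      _ = ∑ n ∈ range k, ∑ m ∈ range k,
            (1/(k:ℂ)^2) * ((c n * ee k (-(((a:ℤ)*h) * n))) * (c m * ee k (-((a:ℤ) * m)))
              * ee k ((j:ℤ)*a)) := by
          rw [Finset.sum_mul, Finset.mul_sum]
          refine Finset.sum_congr rfl fun n _ => ?_
          rw [Finset.sum_mul, Finset.mul_sum]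
      _ = ∑ n ∈ range k, ∑ m ∈ range k,
            (1/(k:ℂ)^2) * (c m * c n * ee k (((j:ℤ) - m - h*n) * a)) := by
          refine Finset.sum_congr rfl fun n _ => Finset.sum_congr rfl fun m _ => ?_
          have hee : ee k (-(((a:ℤ)*h) * n)) * ee k (-((a:ℤ) * m)) * ee k ((j:ℤ)*a)
              = ee k (((j:ℤ) - m - h*n) * a) := by
            rw [← ee_add hk, ← ee_add hk]
            congr 1
            ring
          linear_combination ((1/(k:ℂ)^2) * (c n * c m)) * hee
  rw [Finset.sum_congr rfl hterm, Finset.sum_comm]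
  have hstep2 : ∀ n ∈ range k,
      ∑ a ∈ range k, ∑ m ∈ range k,
          (1/(k:ℂ)^2) * (c m * c n * ee k (((j:ℤ) - m - h*n) * a))
        = (1/(k:ℂ)) * (c (mm n) * c n) := by
    intro n _
    rw [Finset.sum_comm]
    have hin : ∀ m ∈ range k,
        ∑ a ∈ range k, (1/(k:ℂ)^2) * (c m * c n * ee k (((j:ℤ) - m - h*n) * a))
          = (1/(k:ℂ)^2) * (c m * c n * (if (k:ℤ) ∣ ((j:ℤ) - m - h*n) then (k:ℂ) else 0)) := by
      intro m _
      rw [← Finset.mul_sum, ← Finset.mul_sum, sum_ee hk]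
    rw [Finset.sum_congr rfl hin, Finset.sum_eq_single (mm n)]
    · rw [if_pos ((hU n (mm n) (Finset.mem_range.mpr (hmmlt n))).mpr rfl)]
      field_simp
    · intro m hm hne
      rw [if_neg, mul_zero, mul_zero]
      exact fun hd => hne ((hU n m hm).mp hd)
    · intro hc
      exact absurd (Finset.mem_range.mpr (hmmlt n)) hc
  rw [Finset.sum_congr rfl hstep2, ← Finset.mul_sum]
  -- restrict to the index set S
  have hsub : (Finset.Icc 1 (k - 1)).filter (fun a => a ≠ k / 2) ⊆ range k := by
    intro n hn
    simp only [Finset.mem_filter, Finset.mem_Icc] at hn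
    simp only [Finset.mem_range]
    omega
  have hvanish : ∀ n ∈ range k,
      n ∉ (Finset.Icc 1 (k - 1)).filter (fun a => a ≠ k / 2) → c (mm n) * c n = 0 := by
    intro n hn hns
    simp only [Finset.mem_range] at hn
    simp only [Finset.mem_filter, Finset.mem_Icc, not_and, not_not] at hns
    by_cases hn0 : n = 0
    · rw [hn0, hc0, mul_zero]
    · have : n = j := by
        rcases Nat.lt_or_ge n 1 with h1 | h1
        · omega
        · exact hns ⟨h1, by omega⟩
      rw [this, hmj, hc0, zero_mul]
  rw [← Finset.sum_subset hsub hvanish]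
  -- evaluate each remaining term
  have heval : ∀ n ∈ (Finset.Icc 1 (k - 1)).filter (fun a => a ≠ k / 2),
      c (mm n) * c n
        = -(1/4) * (((Real.tan (Real.pi * n * (h:ℝ) / k) : ℝ) : ℂ)
            * ((cot (Real.pi * n / k) : ℝ) : ℂ)) := by
    intro n hn
    simp only [Finset.mem_filter, Finset.mem_Icc] at hn
    obtain ⟨⟨hn1, hn2⟩, hn3⟩ := hn
    have hnk : n < k := by omega
    have hn0 : n ≠ 0 := by omega
    have hnj : n ≠ j := hn3
    have hA := hcoef (mm n) (hmn0 n hnk hn0 hnj) (hmmlt n)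
    have hB := hcoef n hn1 hnk
    rw [hA, hB, hcotmm n hnk hn0 hnj]
    linear_combination ((((Real.tan (Real.pi * n * (h:ℝ) / k) : ℝ) : ℂ)
      * ((cot (Real.pi * n / k) : ℝ) : ℂ))/4) * Complex.I_sq
  rw [Finset.sum_congr rfl heval, ← Finset.mul_sum]
  simp only [hjdef]
  push_cast
  ring
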